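/- For all n ≥ 0, the integral over [-1,1] of (1-t)·P_n^{(2,0)}(t)·P_n^{(1,1)}(t) dt equals 4/(n+2). -/

import Mathlib

open MeasureTheory intervalIntegral Finset

/-- The Jacobi polynomial `P_n^{(a,b)}` with nonnegative integer parameters,
given by the standard finite-sum formula, normalized by
`P_n^{(a,b)}(1) = (a+1)_n / n!`. -/
noncomputable def jacobiP (a b n : ℕ) (x : ℝ) : ℝ :=
  ∑ s ∈ Finset.range (n + 1),
    (Nat.choose (n + a) (n - s) : ℝ) * (Nat.choose (n + b) s : ℝ) *
      ((x - 1) / 2) ^ s * ((x + 1) / 2) ^ (n - s)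

section JacobiAux
open Polynomial

lemma beta_base (r : ℕ) : ∫ t in (-1:ℝ)..1, ((t+1)/2)^r = 2/(r+1) := by
  have h : ∀ t : ℝ, HasDerivAt (fun t : ℝ => 2/((r:ℝ)+1) * ((t+1)/2)^(r+1))
      (((t+1)/2)^r) t := by
    intro t
    have h1 : HasDerivAt (fun t : ℝ => (t+1)/2) (1/2) t :=
      ((hasDerivAt_id t).add_const 1).div_const 2
    have h2 := (h1.pow (r+1)).const_mul (2/((r:ℝ)+1))
    refine h2.congr_deriv ?_
    have : ((r:ℝ)+1) ≠ 0 := by positivity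
    simp only [Nat.add_sub_cancel]
    push_cast
    field_simp
  rw [intervalIntegral.integral_eq_sub_of_hasDerivAt (fun t _ => h t)
    (Continuous.intervalIntegrable (by continuity) _ _)]
  norm_num

lemma betaK (s : ℕ) : ∀ r : ℕ, ∫ t in (-1:ℝ)..1, ((t-1)/2)^s * ((t+1)/2)^r
    = (-1)^s * 2 * (s.factorial) * (r.factorial) / ((s+r+1).factorial) := by
  induction s with
  | zero =>
    intro r
    simp only [pow_zero, one_mul]
    rw [beta_base]
    rw [Nat.factorial_succ]
    push_cast
    rw [eq_div_iff (by positivity)]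
    field_simp
    ring
  | succ s ih =>
    intro r
    have key : ∀ t : ℝ, ((t-1)/2)^(s+1) * ((t+1)/2)^r
        = ((t-1)/2)^s * ((t+1)/2)^(r+1) - ((t-1)/2)^s * ((t+1)/2)^r := by
      intro t; rw [pow_succ]; ring
    rw [intervalIntegral.integral_congr (fun t _ => key t),
      intervalIntegral.integral_sub (Continuous.intervalIntegrable (by continuity) _ _)
        (Continuous.intervalIntegrable (by continuity) _ _), ih (r+1), ih r]
    have h1 : ((s+r+1+1 : ℕ).factorial : ℝ) = (s+r+2) * (s+r+1).factorial := by
      rw [Nat.factorial_succ]; push_cast; ring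
    have h2 : ((s+(r+1)+1 : ℕ) : ℕ) = s+r+1+1 := by omega
    rw [h2, h1]
    have hne : ((s+r+1).factorial : ℝ) ≠ 0 := by exact_mod_cast (s+r+1).factorial_ne_zero
    have h3 : ((s+1+r+1 : ℕ).factorial : ℝ) = (s+r+2) * (s+r+1).factorial := by
      have : s+1+r+1 = s+r+1+1 := by omega
      rw [this, Nat.factorial_succ]; push_cast; ring
    rw [h3]
    rw [Nat.factorial_succ r, Nat.factorial_succ s]
    push_cast
    field_simp
    ring

lemma deg_helper {p : Polynomial ℝ} {m : ℕ} (h : p.degree < ((m+1 : ℕ) : WithBot ℕ)) :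
    p.degree ≤ (m : WithBot ℕ) := by
  cases hd : p.degree with
  | bot => exact bot_le
  | coe k =>
    rw [hd] at h
    rw [Nat.cast_withBot] at h ⊢
    have hk : k < m + 1 := WithBot.coe_lt_coe.mp h
    exact WithBot.coe_le_coe.mpr (by omega)

lemma alt_sum_poly : ∀ (m : ℕ) (p : Polynomial ℝ), p.degree < ((m : ℕ) : WithBot ℕ) →
    ∑ s ∈ range (m+1), (-1:ℝ)^s * (m.choose s) * p.eval (s:ℝ) = 0 := by
  intro m
  induction m with
  | zero =>
    intro p hp
    have : p = 0 := by
      rw [← Polynomial.degree_eq_bot]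
      exact Nat.WithBot.lt_zero_iff.mp (by exact_mod_cast hp)
    simp [this]
  | succ m ih =>
    intro p hp
    set q : Polynomial ℝ := p - p.comp (X + 1) with hq
    have hqdeg : q.degree < ((m : ℕ) : WithBot ℕ) := by
      by_cases hp0 : p = 0
      · have hq0 : q = 0 := by simp [hq, hp0]
        rw [hq0, Polynomial.degree_zero]
        rw [Nat.cast_withBot]
        exact WithBot.bot_lt_coe m
      · have hX1 : (X + 1 : Polynomial ℝ).natDegree = 1 := by
          have : (X + 1 : Polynomial ℝ) = X + C 1 := by norm_num
          rw [this, Polynomial.natDegree_X_add_C]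
        have hlcc := Polynomial.leadingCoeff_comp (q := X + 1) (p := p) (by rw [hX1]; norm_num)
        have hlcX : (X + 1 : Polynomial ℝ).leadingCoeff = 1 := by
          have : (X + 1 : Polynomial ℝ) = X + C 1 := by norm_num
          rw [this, Polynomial.leadingCoeff_X_add_C]
        rw [hlcX, one_pow, mul_one] at hlcc
        have hc0 : p.comp (X+1) ≠ 0 := by
          intro h
          rw [h, Polynomial.leadingCoeff_zero] at hlcc
          exact hp0 (Polynomial.leadingCoeff_eq_zero.mp hlcc.symm)
        have hcompdeg : (p.comp (X+1)).degree = p.degree := by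
          have h1 : (p.comp (X+1)).natDegree = p.natDegree := by
            rw [Polynomial.natDegree_comp, hX1, mul_one]
          rw [Polynomial.degree_eq_natDegree hp0, Polynomial.degree_eq_natDegree hc0, h1]
        have := Polynomial.degree_sub_lt hcompdeg.symm hp0 hlcc.symm
        exact lt_of_lt_of_le this (deg_helper hp)
    have hqeval : ∀ s : ℕ, q.eval (s:ℝ) = p.eval (s:ℝ) - p.eval ((s:ℝ)+1) := by
      intro s; simp [hq, Polynomial.eval_comp]
    have peel : ∑ s ∈ range (m+2), (-1:ℝ)^s * ((m+1).choose s) * p.eval (s:ℝ)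
        = (∑ s ∈ range (m+1), (-1:ℝ)^(s+1) * ((m+1).choose (s+1)) * p.eval ((s:ℝ)+1))
          + p.eval 0 := by
      rw [Finset.sum_range_succ' (fun s => (-1:ℝ)^s * ((m+1).choose s) * p.eval (s:ℝ)) (m+1)]
      push_cast
      norm_num
    have pascal : ∀ s : ℕ, (((m+1).choose (s+1) : ℕ) : ℝ) = (m.choose s : ℝ) + (m.choose (s+1) : ℝ) := by
      intro s
      have := Nat.choose_succ_succ m s
      exact_mod_cast congrArg (Nat.cast (R := ℝ)) this
    have third : ∑ s ∈ range (m+1), (-1:ℝ)^(s+1) * (m.choose (s+1)) * p.eval ((s:ℝ)+1)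
        = (∑ s ∈ range (m+2), (-1:ℝ)^s * (m.choose s) * p.eval (s:ℝ)) - p.eval 0 := by
      rw [Finset.sum_range_succ' (fun s => (-1:ℝ)^s * (m.choose s) * p.eval (s:ℝ)) (m+1)]
      push_cast [Nat.choose_zero_right]
      ring
    have twoterm : ∑ s ∈ range (m+2), (-1:ℝ)^s * (m.choose s) * p.eval (s:ℝ)
        = ∑ s ∈ range (m+1), (-1:ℝ)^s * (m.choose s) * p.eval (s:ℝ) := by
      rw [Finset.sum_range_succ, Nat.choose_eq_zero_of_lt (by omega)]
      norm_num
    calc ∑ s ∈ range (m+1+1), (-1:ℝ)^s * ((m+1).choose s) * p.eval (s:ℝ)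
        = (∑ s ∈ range (m+1), (-1:ℝ)^(s+1) * ((m+1).choose (s+1)) * p.eval ((s:ℝ)+1))
          + p.eval 0 := peel
      _ = (∑ s ∈ range (m+1), ((-1:ℝ)^(s+1) * (m.choose s) * p.eval ((s:ℝ)+1)
            + (-1:ℝ)^(s+1) * (m.choose (s+1)) * p.eval ((s:ℝ)+1))) + p.eval 0 := by
          congr 1
          refine Finset.sum_congr rfl (fun s _ => ?_)
          rw [pascal s]; ring
      _ = (∑ s ∈ range (m+1), (-1:ℝ)^(s+1) * (m.choose s) * p.eval ((s:ℝ)+1))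
            + (∑ s ∈ range (m+1), (-1:ℝ)^(s+1) * (m.choose (s+1)) * p.eval ((s:ℝ)+1))
            + p.eval 0 := by rw [Finset.sum_add_distrib]
      _ = (∑ s ∈ range (m+1), (-1:ℝ)^(s+1) * (m.choose s) * p.eval ((s:ℝ)+1))
            + ((∑ s ∈ range (m+1), (-1:ℝ)^s * (m.choose s) * p.eval (s:ℝ)) - p.eval 0)
            + p.eval 0 := by rw [third, twoterm]
      _ = ∑ s ∈ range (m+1), ((-1:ℝ)^(s+1) * (m.choose s) * p.eval ((s:ℝ)+1)
            + (-1:ℝ)^s * (m.choose s) * p.eval (s:ℝ)) := by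
          rw [Finset.sum_add_distrib]; ring
      _ = ∑ s ∈ range (m+1), (-1:ℝ)^s * (m.choose s) * q.eval (s:ℝ) := by
          refine Finset.sum_congr rfl (fun s _ => ?_)
          rw [hqeval s]; ring
      _ = 0 := ih q hqdeg

lemma fact_prod (a k : ℕ) : (a + k).factorial = a.factorial * ∏ j ∈ range k, (a + 1 + j) := by
  induction k with
  | zero => simp
  | succ k ih =>
    rw [Finset.prod_range_succ, ← mul_assoc, ← ih, show a + (k+1) = (a+k)+1 by omega,
      Nat.factorial_succ]
    ring

lemma orth_pow (m k : ℕ) (h : k < m) :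
    ∫ t in (-1:ℝ)..1, ((t+1)/2)^k * jacobiP 0 0 m t = 0 := by
  set p : Polynomial ℝ := ∏ j ∈ range k, (C ((m:ℝ)+1+j) - X) with hp
  have hpdeg : p.degree < ((m : ℕ) : WithBot ℕ) := by
    have h1 : p.natDegree ≤ k := by
      refine le_trans (Polynomial.natDegree_prod_le _ _) ?_
      have : ∀ j ∈ range k, (C ((m:ℝ)+1+j) - X).natDegree = 1 := by
        intro j _
        have : (C ((m:ℝ)+1+j) - X) = -(X - C ((m:ℝ)+1+j)) := by ring
        rw [this, Polynomial.natDegree_neg, Polynomial.natDegree_X_sub_C]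
      refine le_trans (le_of_eq (Finset.sum_congr rfl this)) ?_
      simp
    refine lt_of_le_of_lt (Polynomial.degree_le_natDegree) ?_
    rw [Nat.cast_withBot, Nat.cast_withBot]
    exact WithBot.coe_lt_coe.mpr (lt_of_le_of_lt h1 h)
  have hpeval : ∀ s : ℕ, s ≤ m → ((∏ j ∈ range k, (m - s + 1 + j) : ℕ) : ℝ) = p.eval (s:ℝ) := by
    intro s hs
    rw [hp, Polynomial.eval_prod, Nat.cast_prod]
    refine Finset.prod_congr rfl (fun j _ => ?_)
    rw [Polynomial.eval_sub, Polynomial.eval_C, Polynomial.eval_X,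
      show (m - s + 1 + j : ℕ) = (m + 1 + j) - s from by omega, Nat.cast_sub (by omega)]
    push_cast
    ring
  have expand : ∀ t : ℝ, ((t+1)/2)^k * jacobiP 0 0 m t
      = ∑ s ∈ range (m+1), ((m.choose (m-s) : ℝ) * (m.choose s)) *
          (((t-1)/2)^s * ((t+1)/2)^(m-s+k)) := by
    intro t
    unfold jacobiP
    rw [Finset.mul_sum]
    refine Finset.sum_congr rfl (fun s hs => ?_)
    rw [pow_add]
    push_cast
    ring
  rw [intervalIntegral.integral_congr (fun t _ => expand t)]
  rw [intervalIntegral.integral_finset_sum (fun s _ =>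
    Continuous.intervalIntegrable (by continuity) _ _)]
  have term_eq : ∀ s ∈ range (m+1),
      (∫ t in (-1:ℝ)..1, ((m.choose (m-s) : ℝ) * (m.choose s)) *
        (((t-1)/2)^s * ((t+1)/2)^(m-s+k)))
      = (2 * (m.factorial) / ((m+k+1).factorial)) *
          ((-1:ℝ)^s * (m.choose s) * p.eval (s:ℝ)) := by
    intro s hs
    have hsm : s ≤ m := by simp at hs; omega
    rw [intervalIntegral.integral_const_mul, betaK s (m-s+k)]
    have e1 : s + (m - s + k) + 1 = m + k + 1 := by omega
    rw [e1]
    rw [Nat.choose_symm hsm]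
    -- C(m,s) * s! * (m-s+k)! = m! * ∏_{j<k}(m-s+1+j)  (as naturals)
    have e2 : (m.choose s) * s.factorial * (m-s+k).factorial
        = m.factorial * ∏ j ∈ range k, (m - s + 1 + j) := by
      rw [fact_prod (m-s) k, ← mul_assoc, Nat.choose_mul_factorial_mul_factorial hsm]
    have e3 : ((m.choose s : ℝ)) * s.factorial * (m-s+k).factorial
        = m.factorial * p.eval (s:ℝ) := by
      rw [← hpeval s hsm]
      exact_mod_cast congrArg (Nat.cast (R := ℝ)) e2
    have hfne : (((m+k+1).factorial : ℝ)) ≠ 0 := by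
      exact_mod_cast (m+k+1).factorial_ne_zero
    field_simp
    linear_combination ((m.choose s : ℕ) : ℝ) * e3
  rw [Finset.sum_congr rfl term_eq, ← Finset.mul_sum, alt_sum_poly m p hpdeg, mul_zero]

lemma jacobiP_continuous (a b n : ℕ) : Continuous (jacobiP a b n) := by
  unfold jacobiP
  apply continuous_finset_sum
  intro s _
  continuity

lemma orth_tpow (m k : ℕ) (h : k < m) :
    ∫ t in (-1:ℝ)..1, t^k * jacobiP 0 0 m t = 0 := by
  have expand : ∀ t : ℝ, t^k * jacobiP 0 0 m t
      = ∑ j ∈ range (k+1), ((2:ℝ)^j * (-1)^(k-j) * (k.choose j)) *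
          (((t+1)/2)^j * jacobiP 0 0 m t) := by
    intro t
    have ht : t = 2*((t+1)/2) + (-1) := by ring
    have hb : t^k = ∑ j ∈ range (k+1), ((2:ℝ)^j * (-1)^(k-j) * (k.choose j)) * ((t+1)/2)^j := by
      conv_lhs => rw [ht]
      rw [add_pow]
      refine Finset.sum_congr rfl (fun j _ => ?_)
      rw [mul_pow]
      ring
    rw [hb, Finset.sum_mul]
    refine Finset.sum_congr rfl (fun j _ => ?_)
    ring
  rw [intervalIntegral.integral_congr (fun t _ => expand t),
    intervalIntegral.integral_finset_sum (fun j _ => Continuous.intervalIntegrable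
      (by exact (continuous_const.mul (Continuous.mul (by continuity) (jacobiP_continuous 0 0 m)))) _ _)]
  refine Finset.sum_eq_zero (fun j hj => ?_)
  rw [intervalIntegral.integral_const_mul, orth_pow m j (by simp at hj; omega), mul_zero]

lemma orth_poly (m : ℕ) (p : Polynomial ℝ) (h : p.natDegree < m) :
    ∫ t in (-1:ℝ)..1, p.eval t * jacobiP 0 0 m t = 0 := by
  have expand : ∀ t : ℝ, p.eval t * jacobiP 0 0 m t
      = ∑ i ∈ range (p.natDegree + 1), (p.coeff i) * (t^i * jacobiP 0 0 m t) := by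
    intro t
    rw [Polynomial.eval_eq_sum_range, Finset.sum_mul]
    refine Finset.sum_congr rfl (fun i _ => ?_)
    ring
  rw [intervalIntegral.integral_congr (fun t _ => expand t),
    intervalIntegral.integral_finset_sum (fun i _ => Continuous.intervalIntegrable
      (by exact continuous_const.mul ((continuous_pow i).mul (jacobiP_continuous 0 0 m))) _ _)]
  refine Finset.sum_eq_zero (fun i hi => ?_)
  rw [intervalIntegral.integral_const_mul, orth_tpow m i (by simp at hi; omega), mul_zero]

lemma key_real (m s : ℕ) (hs : s ≤ m) :
    ((m.choose (s+1) : ℝ)) * (m.choose (s+1)) * (s+1)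
      + (m.choose s) * (m.choose s) * ((m:ℝ)-s)
    = ((m:ℝ)+1) * (m.choose (s+1)) * (m.choose s) := by
  have h1 : ((m.choose (s+1) : ℝ)) * (s+1) = (m.choose s) * ((m:ℝ)-s) := by
    have := Nat.choose_succ_right_eq m s
    have h := congrArg (Nat.cast (R := ℝ)) this
    push_cast [Nat.cast_sub hs] at h
    linarith [h]
  have h2 : ((m:ℝ)+1) * (m.choose (s+1)) = ((m+1).choose (s+2) : ℝ) * (s+2) := by
    have := Nat.add_one_mul_choose_eq m (s+1)
    have h := congrArg (Nat.cast (R := ℝ)) this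
    push_cast at h
    linarith [h]
  have h3 : ((m+1).choose (s+2) : ℝ) * (s+2) = ((m+1).choose (s+1) : ℝ) * ((m:ℝ)-s) := by
    have := Nat.choose_succ_right_eq (m+1) (s+1)
    have h := congrArg (Nat.cast (R := ℝ)) this
    have h4 : m + 1 - (s+1) = m - s := by omega
    rw [h4] at h
    push_cast [Nat.cast_sub hs] at h
    linarith [h]
  have h5 : (((m+1).choose (s+1) : ℕ) : ℝ) = (m.choose s) + (m.choose (s+1)) := by
    exact_mod_cast congrArg (Nat.cast (R := ℝ)) (Nat.choose_succ_succ m s)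
  linear_combination ((m.choose (s+1) : ℝ)) * h1 - ((m.choose s : ℝ) * ((m:ℝ)-(s:ℝ))) * h5
    - ((m.choose s : ℝ)) * h3 - ((m.choose s : ℝ)) * h2

lemma hasDeriv_jacobi00 (n : ℕ) (x : ℝ) :
    HasDerivAt (fun y => jacobiP 0 0 (n+1) y)
      ((((n:ℝ))+2)/2 * jacobiP 1 1 n x) x := by
  have hu : HasDerivAt (fun y : ℝ => (y-1)/2) (1/2) x :=
    ((hasDerivAt_id x).sub_const 1).div_const 2
  have hv : HasDerivAt (fun y : ℝ => (y+1)/2) (1/2) x :=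
    ((hasDerivAt_id x).add_const 1).div_const 2
  have hterm : ∀ r : ℕ, HasDerivAt
      (fun y => ((n+1+0).choose (n+1-r) : ℝ) * ((n+1+0).choose r : ℝ) *
        ((y - 1) / 2) ^ r * ((y + 1) / 2) ^ (n+1-r))
      ((((n+1).choose (n+1-r) : ℝ) * ((n+1).choose r : ℝ)) *
        ((r : ℝ) * ((x-1)/2)^(r-1) * (1/2) * ((x+1)/2)^(n+1-r)
          + ((x-1)/2)^r * (((n+1-r : ℕ) : ℝ) * ((x+1)/2)^(n+1-r-1) * (1/2)))) x := by
    intro r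
    have h1 := (hu.pow r).mul (hv.pow (n+1-r))
    have h2 := h1.const_mul (((n+1).choose (n+1-r) : ℝ) * ((n+1).choose r : ℝ))
    refine (h2.congr_deriv ?_).congr_of_eventuallyEq (Filter.Eventually.of_forall fun y => ?_)
    all_goals (simp only [Pi.pow_apply, Pi.mul_apply] <;> push_cast <;> ring)
  have hsum : HasDerivAt (fun y => jacobiP 0 0 (n+1) y)
      (∑ r ∈ range (n+2), ((((n+1).choose (n+1-r) : ℝ) * ((n+1).choose r : ℝ)) *
        ((r : ℝ) * ((x-1)/2)^(r-1) * (1/2) * ((x+1)/2)^(n+1-r)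
          + ((x-1)/2)^r * (((n+1-r : ℕ) : ℝ) * ((x+1)/2)^(n+1-r-1) * (1/2))))) x := by
    have := HasDerivAt.fun_sum (fun r (_ : r ∈ range (n+2)) => hterm r)
    refine this.congr_of_eventuallyEq (Filter.Eventually.of_forall fun y => ?_)
    simp only [jacobiP, Finset.sum_apply]
  convert hsum using 1
  -- now prove the sum identity
  set u := ((x-1)/2 : ℝ)
  set v := ((x+1)/2 : ℝ)
  have split : ∑ r ∈ range (n+2), ((((n+1).choose (n+1-r) : ℝ) * ((n+1).choose r : ℝ)) *
        ((r : ℝ) * u^(r-1) * (1/2) * v^(n+1-r)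
          + u^r * (((n+1-r : ℕ) : ℝ) * v^(n+1-r-1) * (1/2))))
      = (∑ r ∈ range (n+2), (((n+1).choose (n+1-r) : ℝ) * ((n+1).choose r : ℝ)) *
          ((r : ℝ) * u^(r-1) * (1/2) * v^(n+1-r)))
        + (∑ r ∈ range (n+2), (((n+1).choose (n+1-r) : ℝ) * ((n+1).choose r : ℝ)) *
          (u^r * (((n+1-r : ℕ) : ℝ) * v^(n+1-r-1) * (1/2)))) := by
    rw [← Finset.sum_add_distrib]
    refine Finset.sum_congr rfl (fun r _ => by ring)
  have sumA : (∑ r ∈ range (n+2), (((n+1).choose (n+1-r) : ℝ) * ((n+1).choose r : ℝ)) *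
          ((r : ℝ) * u^(r-1) * (1/2) * v^(n+1-r)))
      = ∑ s ∈ range (n+1), (((n+1).choose (n-s) : ℝ) * ((n+1).choose (s+1) : ℝ)) *
          (((s:ℝ)+1) * u^s * (1/2) * v^(n-s)) := by
    rw [Finset.sum_range_succ' (fun r => (((n+1).choose (n+1-r) : ℝ) * ((n+1).choose r : ℝ)) *
          ((r : ℝ) * u^(r-1) * (1/2) * v^(n+1-r))) (n+1)]
    simp only [Nat.cast_zero, zero_mul, mul_zero, add_zero]
    refine Finset.sum_congr rfl (fun s _ => ?_)
    have e1 : n + 1 - (s+1) = n - s := by omega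
    have e2 : s + 1 - 1 = s := by omega
    rw [e1, e2]
    push_cast
    ring
  have sumB : (∑ r ∈ range (n+2), (((n+1).choose (n+1-r) : ℝ) * ((n+1).choose r : ℝ)) *
          (u^r * (((n+1-r : ℕ) : ℝ) * v^(n+1-r-1) * (1/2))))
      = ∑ s ∈ range (n+1), (((n+1).choose (n+1-s) : ℝ) * ((n+1).choose s : ℝ)) *
          (u^s * (((n+1-s : ℕ) : ℝ) * v^(n-s) * (1/2))) := by
    rw [Finset.sum_range_succ]
    simp only [Nat.sub_self, Nat.cast_zero, zero_mul, mul_zero, add_zero]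
    refine Finset.sum_congr rfl (fun s hs => ?_)
    have hsn : s ≤ n := by simp at hs; omega
    have e1 : n + 1 - s - 1 = n - s := by omega
    rw [e1]
  rw [split, sumA, sumB, ← Finset.sum_add_distrib]
  unfold jacobiP
  rw [Finset.mul_sum]
  refine Finset.sum_congr rfl (fun s hs => ?_)
  have hsn : s ≤ n := by simp at hs; omega
  -- rewrite binomials into symmetric form
  have c1 : ((n+1).choose (n-s) : ℝ) = ((n+1).choose (s+1) : ℝ) := by
    rw [show n - s = n + 1 - (s+1) from by omega, Nat.choose_symm (by omega)]
  have c2 : ((n+1).choose (n+1-s) : ℝ) = ((n+1).choose s : ℝ) := by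
    rw [Nat.choose_symm (by omega)]
  rw [c1, c2]
  have c3 : ((n+1-s : ℕ) : ℝ) = (n:ℝ) + 1 - s := by
    push_cast [Nat.cast_sub (show s ≤ n+1 by omega)]; ring
  rw [c3]
  have key := key_real (n+1) s (by omega)
  push_cast at key ⊢
  linear_combination (-(u^s * v^(n-s))/2) * key

noncomputable def jPoly (a b n : ℕ) : Polynomial ℝ :=
  ∑ s ∈ range (n+1), Polynomial.C (((n+a).choose (n-s) : ℝ) * ((n+b).choose s : ℝ)) *
    ((X - Polynomial.C 1) * Polynomial.C (2⁻¹ : ℝ))^s *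
    ((X + Polynomial.C 1) * Polynomial.C (2⁻¹ : ℝ))^(n-s)

lemma jPoly_eval (a b n : ℕ) (x : ℝ) : (jPoly a b n).eval x = jacobiP a b n x := by
  unfold jPoly jacobiP
  rw [Polynomial.eval_finset_sum]
  refine Finset.sum_congr rfl (fun s _ => ?_)
  simp only [Polynomial.eval_mul, Polynomial.eval_pow, Polynomial.eval_sub, Polynomial.eval_add,
    Polynomial.eval_X, Polynomial.eval_C, Polynomial.eval_one]
  rw [div_eq_mul_inv, div_eq_mul_inv]

lemma jPoly_natDegree_le (a b n : ℕ) : (jPoly a b n).natDegree ≤ n := by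
  refine Polynomial.natDegree_sum_le_of_forall_le _ _ (fun s hs => ?_)
  have hsn : s ≤ n := by simp at hs; omega
  have hX1 : (X - Polynomial.C 1 : Polynomial ℝ).natDegree ≤ 1 := by
    refine le_trans (Polynomial.natDegree_sub_le _ _) ?_
    simp
  have hX2 : (X + Polynomial.C 1 : Polynomial ℝ).natDegree ≤ 1 := by
    refine le_trans (Polynomial.natDegree_add_le _ _) ?_
    simp
  have h1 : ((X - Polynomial.C 1) * Polynomial.C (2⁻¹ : ℝ)).natDegree ≤ 1 := by
    refine le_trans (Polynomial.natDegree_mul_le) ?_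
    simp only [Polynomial.natDegree_C, add_zero]
    exact hX1
  have h2 : ((X + Polynomial.C 1) * Polynomial.C (2⁻¹ : ℝ)).natDegree ≤ 1 := by
    refine le_trans (Polynomial.natDegree_mul_le) ?_
    simp only [Polynomial.natDegree_C, add_zero]
    exact hX2
  refine le_trans (Polynomial.natDegree_mul_le) ?_
  have h3 : (Polynomial.C (((n+a).choose (n-s) : ℝ) * ((n+b).choose s : ℝ)) *
      ((X - Polynomial.C 1) * Polynomial.C (2⁻¹ : ℝ))^s).natDegree ≤ s := by
    refine le_trans (Polynomial.natDegree_mul_le) ?_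
    have := Polynomial.natDegree_pow_le (p := (X - Polynomial.C 1) * Polynomial.C (2⁻¹ : ℝ)) (n := s)
    simp only [Polynomial.natDegree_C, zero_add]
    refine le_trans this ?_
    calc s * ((X - Polynomial.C 1) * Polynomial.C (2⁻¹ : ℝ)).natDegree ≤ s * 1 :=
          Nat.mul_le_mul_left s h1
      _ = s := by omega
  have h4 : (((X + Polynomial.C 1) * Polynomial.C (2⁻¹ : ℝ))^(n-s)).natDegree ≤ n - s := by
    refine le_trans (Polynomial.natDegree_pow_le) ?_
    calc (n-s) * ((X + Polynomial.C 1) * Polynomial.C (2⁻¹ : ℝ)).natDegree ≤ (n-s) * 1 :=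
          Nat.mul_le_mul_left _ h2
      _ = n - s := by omega
  omega

lemma jacobiP_one (a b n : ℕ) : jacobiP a b n 1 = ((n+a).choose n : ℝ) := by
  unfold jacobiP
  rw [Finset.sum_eq_single 0]
  · norm_num
  · intro s _ hs0
    have : ((1:ℝ) - 1)/2 = 0 := by norm_num
    rw [this, zero_pow hs0]
    ring
  · intro h; simp at h

lemma jacobiP_neg_one (a b n : ℕ) : jacobiP a b n (-1) = (-1:ℝ)^n * ((n+b).choose n : ℝ) := by
  unfold jacobiP
  rw [Finset.sum_eq_single n]
  · have : ((-1:ℝ) - 1)/2 = -1 := by norm_num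
    rw [this]
    norm_num
    try ring
  · intro s hs hsn
    have h1 : ((-1:ℝ) + 1)/2 = 0 := by norm_num
    have h2 : n - s ≠ 0 := by simp at hs; omega
    rw [h1, zero_pow h2]
    ring
  · intro h; simp at h

end JacobiAux

open Polynomial in
theorem integral_one_sub_mul_jacobiP_two_zero_mul_one_one (n : ℕ) :
    ∫ t in (-1 : ℝ)..1, (1 - t) * jacobiP 2 0 n t * jacobiP 1 1 n t
      = 4 / ((n : ℝ) + 2) := by
  set f : Polynomial ℝ := (1 - Polynomial.X) * jPoly 2 0 n with hf
  have hfeval : ∀ t : ℝ, f.eval t = (1-t) * jacobiP 2 0 n t := by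
    intro t
    rw [hf, Polynomial.eval_mul, Polynomial.eval_sub, Polynomial.eval_one, Polynomial.eval_X,
      jPoly_eval]
  have hfdeg : (Polynomial.derivative f).natDegree < n+1 := by
    have h1 : f.natDegree ≤ n+1 := by
      refine le_trans (Polynomial.natDegree_mul_le) ?_
      have h2 : (1 - Polynomial.X : Polynomial ℝ).natDegree ≤ 1 := by
        refine le_trans (Polynomial.natDegree_sub_le _ _) ?_
        simp
      have := jPoly_natDegree_le 2 0 n
      omega
    have := Polynomial.natDegree_derivative_le f
    omega
  have hne : ((n:ℝ)+2) ≠ 0 := by positivity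
  have hu : ∀ t ∈ Set.uIcc (-1:ℝ) 1, HasDerivAt (fun y => Polynomial.eval y f)
      ((Polynomial.derivative f).eval t) t := fun t _ => f.hasDerivAt t
  have hv : ∀ t ∈ Set.uIcc (-1:ℝ) 1, HasDerivAt (fun y => jacobiP 0 0 (n+1) y)
      ((((n:ℝ))+2)/2 * jacobiP 1 1 n t) t := fun t _ => hasDeriv_jacobi00 n t
  have hint1 : IntervalIntegrable (fun t => (Polynomial.derivative f).eval t)
      volume (-1:ℝ) 1 := ((Polynomial.derivative f).continuous_aeval.intervalIntegrable _ _)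
  have hint2 : IntervalIntegrable (fun t => (((n:ℝ))+2)/2 * jacobiP 1 1 n t)
      volume (-1:ℝ) 1 :=
    (continuous_const.mul (jacobiP_continuous 1 1 n)).intervalIntegrable _ _
  have ibp := intervalIntegral.integral_mul_deriv_eq_deriv_mul hu hv hint1 hint2
  have trans : ∀ t ∈ Set.uIcc (-1:ℝ) 1, (1-t) * jacobiP 2 0 n t * jacobiP 1 1 n t
      = (2/((n:ℝ)+2)) * (Polynomial.eval t f * ((((n:ℝ))+2)/2 * jacobiP 1 1 n t)) := by
    intro t _
    rw [hfeval]
    field_simp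
  rw [intervalIntegral.integral_congr trans, intervalIntegral.integral_const_mul, ibp]
  have horth : (∫ t in (-1:ℝ)..1, (Polynomial.derivative f).eval t * jacobiP 0 0 (n+1) t) = 0 :=
    orth_poly (n+1) _ hfdeg
  rw [horth]
  rw [hfeval 1, hfeval (-1), jacobiP_neg_one 2 0 n, jacobiP_neg_one 0 0 (n+1)]
  have hsign : (-1:ℝ)^n * (-1:ℝ)^(n+1) = -1 := by
    rw [← pow_add, show n + (n+1) = 2*n+1 from by omega]
    exact Odd.neg_one_pow ⟨n, by ring⟩
  norm_num
  field_simp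
  nlinarith [hsign]
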